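/- arXiv:1904.06428 — 2 statements merged into one kernel-verified Lean document; each statement's English description precedes it below -/
import Mathlib

section
/- Let p ∈ ℕ\{0}, t = (t_x,t_y) with t_x,t_y > 0 and t_x,t_y < p, and q = ⌈p/max(t_x,t_y)⌉. With Ω₀ and J as above (orbits of translation by t in ω = ⟦0,p−1⟧²), for every m with 2 ≤ m < q, the number of entry points x₀ ∈ Ω₀ with J(x₀) = m equals 2 t_x t_y. -/
open Set

set_option maxHeartbeats 1000000 in
/-- Multiplicity count (Proposition 4.4 (b)): for 2 ≤ m < q = ⌈p / max(t_x,t_y)⌉,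
the number of entry points x₀ ∈ Ω₀ with exit time J(x₀) = m equals 2·t_x·t_y. -/
theorem stmt_14 (p tx ty : ℕ) (hp : 0 < p) (htx : 0 < tx) (hty : 0 < ty)
    (htxp : tx < p) (htyp : ty < p)
    (t : ℤ × ℤ) (ht : t = ((tx : ℤ), (ty : ℤ)))
    (ω : Set (ℤ × ℤ))
    (hω : ω = {x : ℤ × ℤ | 0 ≤ x.1 ∧ x.1 ≤ (p : ℤ) - 1 ∧ 0 ≤ x.2 ∧ x.2 ≤ (p : ℤ) - 1})
    (Ω₀ : Set (ℤ × ℤ)) (hΩ₀ : Ω₀ = {x : ℤ × ℤ | x + t ∈ ω ∧ x ∉ ω})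
    (J : ℤ × ℤ → ℕ)
    (hJ : ∀ x₀, J x₀ = sInf {k : ℕ | 0 < k ∧ x₀ + k • t ∉ ω})
    (q : ℕ) (hq : q = (p + max tx ty - 1) / max tx ty)
    (m : ℕ) (hm₁ : 2 ≤ m) (hm₂ : m < q) :
    Nat.card {x₀ : ℤ × ℤ | x₀ ∈ Ω₀ ∧ J x₀ = m} = 2 * tx * ty := by
  -- basic cast facts
  have htx' : (0:ℤ) < tx := by exact_mod_cast htx
  have hty' : (0:ℤ) < ty := by exact_mod_cast hty
  have hpx : (tx:ℤ) < p := by exact_mod_cast htxp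
  have hpy : (ty:ℤ) < p := by exact_mod_cast htyp
  have hm2 : (2:ℤ) ≤ (m:ℤ) := by exact_mod_cast hm₁
  -- key numeric bound : m * max tx ty + 1 ≤ p
  have hkey : m * max tx ty + 1 ≤ p := by
    have h1 : (m + 1) * max tx ty ≤ q * max tx ty :=
      Nat.mul_le_mul_right _ hm₂
    have h2 : q * max tx ty ≤ p + max tx ty - 1 := by
      rw [hq]; exact Nat.div_mul_le_self _ _
    have h3 := le_trans h1 h2
    rw [add_mul, one_mul] at h3
    have hT1 : 1 ≤ max tx ty := le_trans htx (le_max_left _ _)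
    omega
  have hxk : (m:ℤ) * tx + 1 ≤ p := by
    have h : m * tx + 1 ≤ p := by
      have := Nat.mul_le_mul_left m (le_max_left tx ty); omega
    exact_mod_cast h
  have hyk : (m:ℤ) * ty + 1 ≤ p := by
    have h : m * ty + 1 ≤ p := by
      have := Nat.mul_le_mul_left m (le_max_right tx ty); omega
    exact_mod_cast h
  have h2tx : 2 * (tx:ℤ) ≤ (m:ℤ) * tx := mul_le_mul_of_nonneg_right hm2 (le_of_lt htx')
  have h2ty : 2 * (ty:ℤ) ≤ (m:ℤ) * ty := mul_le_mul_of_nonneg_right hm2 (le_of_lt hty')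
  -- membership in ω
  have hωmem : ∀ u v : ℤ, ((u, v) ∈ ω ↔ (0 ≤ u ∧ u ≤ (p:ℤ) - 1 ∧ 0 ≤ v ∧ v ≤ (p:ℤ) - 1)) := by
    intro u v; rw [hω]; rfl
  -- smul computation
  have hsm : ∀ (k : ℕ) (a b : ℤ), (a, b) + k • t = (a + k * tx, b + k * ty) := by
    intro k a b; rw [ht]; simp [Prod.ext_iff, nsmul_eq_mul]
  -- characterization of not-in-ω along the orbit
  have hnot : ∀ (a b : ℤ) (k : ℕ), -(tx:ℤ) ≤ a → -(ty:ℤ) ≤ b → 0 < k →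
      ((a, b) + k • t ∉ ω ↔ ((p:ℤ) ≤ a + k * tx ∨ (p:ℤ) ≤ b + k * ty)) := by
    intro a b k ha hb hk
    rw [hsm, hωmem]
    have hk1 : (1:ℤ) ≤ (k:ℤ) := by exact_mod_cast hk
    have h1 : (tx:ℤ) ≤ k * tx := le_mul_of_one_le_left (le_of_lt htx') hk1
    have h2 : (ty:ℤ) ≤ k * ty := le_mul_of_one_le_left (le_of_lt hty') hk1
    constructor
    · intro h
      by_contra hc
      push_neg at hc
      exact h ⟨by linarith, by linarith [hc.1], by linarith, by linarith [hc.2]⟩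
    · rintro (h | h) hcon
      · linarith [hcon.2.1]
      · linarith [hcon.2.2.2]
  -- characterization of J = m
  have hJchar : ∀ a b : ℤ, -(tx:ℤ) ≤ a → -(ty:ℤ) ≤ b →
      (J (a, b) = m ↔
        (((p:ℤ) ≤ a + m * tx ∨ (p:ℤ) ≤ b + m * ty) ∧
          a + m * tx - tx ≤ (p:ℤ) - 1 ∧ b + m * ty - ty ≤ (p:ℤ) - 1)) := by
    intro a b ha hb
    rw [hJ]
    set Sk : Set ℕ := {k : ℕ | 0 < k ∧ (a, b) + k • t ∉ ω} with hSk
    have hmemk : ∀ k : ℕ, k ∈ Sk ↔ (0 < k ∧ ((p:ℤ) ≤ a + k * tx ∨ (p:ℤ) ≤ b + k * ty)) := by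
      intro k
      constructor
      · rintro ⟨hk, hkn⟩; exact ⟨hk, (hnot a b k ha hb hk).1 hkn⟩
      · rintro ⟨hk, hkn⟩; exact ⟨hk, (hnot a b k ha hb hk).2 hkn⟩
    constructor
    · intro hJm
      -- nonempty
      have hwit : (p + 1 : ℕ) ∈ Sk := by
        rw [hmemk]
        refine ⟨by omega, Or.inl ?_⟩
        push_cast
        nlinarith
      have hne : Sk.Nonempty := ⟨p + 1, hwit⟩
      have hmmem : m ∈ Sk := hJm ▸ Nat.sInf_mem hne
      rw [hmemk] at hmmem
      have hm1mem : (m - 1 : ℕ) ∉ Sk := Nat.notMem_of_lt_sInf (by omega)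
      rw [hmemk] at hm1mem
      push_neg at hm1mem
      have hlt := hm1mem (by omega)
      have hcast : ((m - 1 : ℕ) : ℤ) = (m:ℤ) - 1 := by
        have : (1:ℕ) ≤ m := by omega
        push_cast [this]; ring
      rw [hcast] at hlt
      refine ⟨hmmem.2, by linarith [hlt.1], by linarith [hlt.2]⟩
    · rintro ⟨hd, h1, h2⟩
      have hmmem : m ∈ Sk := by rw [hmemk]; exact ⟨by omega, hd⟩
      refine le_antisymm (Nat.sInf_le hmmem) ?_
      by_contra hc
      push_neg at hc
      have hkin : sInf Sk ∈ Sk := Nat.sInf_mem ⟨m, hmmem⟩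
      rw [hmemk] at hkin
      obtain ⟨hk0, hkd⟩ := hkin
      have hkle : ((sInf Sk : ℕ) : ℤ) ≤ (m:ℤ) - 1 := by
        have : sInf Sk ≤ m - 1 := by omega
        have := (@Nat.cast_le ℤ _ _ _).2 this
        rw [Nat.cast_sub (by omega : (1:ℕ) ≤ m)] at this
        simpa using this
      have hx : ((sInf Sk : ℕ) : ℤ) * tx ≤ ((m:ℤ) - 1) * tx :=
        mul_le_mul_of_nonneg_right hkle (le_of_lt htx')
      have hy : ((sInf Sk : ℕ) : ℤ) * ty ≤ ((m:ℤ) - 1) * ty :=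
        mul_le_mul_of_nonneg_right hkle (le_of_lt hty')
      rcases hkd with h | h
      · nlinarith
      · nlinarith
  -- membership in Ω₀
  have hΩmem : ∀ a b : ℤ, ((a, b) ∈ Ω₀ ↔
      (-(tx:ℤ) ≤ a ∧ a ≤ (p:ℤ) - 1 - tx ∧ -(ty:ℤ) ≤ b ∧ b ≤ (p:ℤ) - 1 - ty ∧ (a < 0 ∨ b < 0))) := by
    intro a b
    rw [hΩ₀]
    simp only [Set.mem_setOf_eq, ht, Prod.mk_add_mk]
    rw [hωmem, hωmem]
    omega
  -- the explicit finite set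
  set S : Finset (ℤ × ℤ) :=
    (Finset.Ico (-(tx:ℤ)) 0 ×ˢ Finset.Ico ((p:ℤ) - m * ty) ((p:ℤ) - m * ty + ty)) ∪
    (Finset.Ico ((p:ℤ) - m * tx) ((p:ℤ) - m * tx + tx) ×ˢ Finset.Ico (-(ty:ℤ)) 0) with hS
  have hsetEq : {x₀ : ℤ × ℤ | x₀ ∈ Ω₀ ∧ J x₀ = m} = ↑S := by
    ext ⟨a, b⟩
    simp only [Set.mem_setOf_eq, Finset.mem_coe, hS, Finset.mem_union, Finset.mem_product,
      Finset.mem_Ico]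
    constructor
    · rintro ⟨hmem, hJm⟩
      rw [hΩmem] at hmem
      obtain ⟨ha1, ha2, hb1, hb2, hneg⟩ := hmem
      rw [hJchar a b ha1 hb1] at hJm
      obtain ⟨hd, hx1, hy1⟩ := hJm
      rcases hneg with hA | hB
      · left
        rcases hd with h | h
        · exfalso; linarith
        · exact ⟨⟨ha1, hA⟩, by linarith, by linarith⟩
      · rcases hd with h | h
        · right; exact ⟨⟨by linarith, by linarith⟩, hb1, hB⟩
        · exfalso; linarith
    · rintro (⟨⟨ha1, ha2⟩, hb1, hb2⟩ | ⟨⟨ha1, ha2⟩, hb1, hb2⟩)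
      · have hBlow : -(ty:ℤ) ≤ b := by linarith
        refine ⟨?_, ?_⟩
        · rw [hΩmem]
          exact ⟨ha1, by linarith, hBlow, by linarith, Or.inl ha2⟩
        · rw [hJchar a b ha1 hBlow]
          exact ⟨Or.inr (by linarith), by linarith, by linarith⟩
      · have hAlow : -(tx:ℤ) ≤ a := by linarith
        refine ⟨?_, ?_⟩
        · rw [hΩmem]
          exact ⟨hAlow, by linarith, hb1, by linarith, Or.inr hb2⟩
        · rw [hJchar a b hAlow hb1]
          exact ⟨Or.inl (by linarith), by linarith, by linarith⟩
  rw [hsetEq, Nat.card_coe_set_eq, Set.ncard_coe_finset]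
  have hdisj : Disjoint
      (Finset.Ico (-(tx:ℤ)) 0 ×ˢ Finset.Ico ((p:ℤ) - m * ty) ((p:ℤ) - m * ty + ty))
      (Finset.Ico ((p:ℤ) - m * tx) ((p:ℤ) - m * tx + tx) ×ˢ Finset.Ico (-(ty:ℤ)) 0) := by
    rw [Finset.disjoint_left]
    rintro ⟨a, b⟩ h1 h2
    simp only [Finset.mem_product, Finset.mem_Ico] at h1 h2
    linarith [h1.1.2, h2.1.1]
  rw [hS, Finset.card_union_of_disjoint hdisj, Finset.card_product, Finset.card_product,
    Int.card_Ico, Int.card_Ico, Int.card_Ico, Int.card_Ico]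
  have e1 : (0 - -(tx:ℤ)) = (tx:ℤ) := by ring
  have e2 : ((p:ℤ) - m * ty + ty - ((p:ℤ) - m * ty)) = (ty:ℤ) := by ring
  have e3 : ((p:ℤ) - m * tx + tx - ((p:ℤ) - m * tx)) = (tx:ℤ) := by ring
  have e4 : (0 - -(ty:ℤ)) = (ty:ℤ) := by ring
  rw [e1, e2, e3, e4, Int.toNat_natCast, Int.toNat_natCast]
  ring
end

section
/- Consider the alternate minimization scheme: given q(B,M) = Σ_{e∈E}‖m_e b₁ + n_e b₂ − e‖² + δ_B‖B‖² + δ_M‖M‖² with δ_B, δ_M > 0, iterate: M_{n+1} ∈ ℤ^{2|E|} is accepted only if q(B_n, M_{n+1}) < q(B_n, M_n) (otherwise M_{n+1} = M_n), and B_{n+1} = argmin_B q(B, M_{n+1}). Then the sequence q(B_n, M_n) is non-increasing, the sequences (B_n) and (M_n) are bounded, and (M_n) and (B_n) are eventually constant, i.e., the algorithm converges in finitely many iterations. -/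
open Finset

lemma mid_sq {E : Type*} [NormedAddCommGroup E] [InnerProductSpace ℝ E] (x y : E) :
    ‖(2:ℝ)⁻¹ • (x + y)‖^2 = (‖x‖^2 + ‖y‖^2)/2 - ‖x - y‖^2/4 := by
  have h := parallelogram_law_with_norm ℝ x y
  rw [norm_smul]
  have h2 : ‖(2:ℝ)⁻¹‖ = 2⁻¹ := by norm_num
  rw [h2]
  nlinarith [h, norm_nonneg (x+y), norm_nonneg (x-y)]

lemma uniq_min {ι : Type*} [Fintype ι]
    (e : ι → EuclideanSpace ℝ (Fin 2)) (δB δM : ℝ) (hδB : 0 < δB)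
    (Q : (EuclideanSpace ℝ (Fin 2) × EuclideanSpace ℝ (Fin 2)) → (ι → ℤ × ℤ) → ℝ)
    (hQ : ∀ B M, Q B M =
      (∑ i, ‖((M i).1 : ℝ) • B.1 + ((M i).2 : ℝ) • B.2 - e i‖ ^ 2)
        + δB * (‖B.1‖ ^ 2 + ‖B.2‖ ^ 2)
        + δM * ∑ i, (((M i).1 : ℝ) ^ 2 + (((M i).2 : ℝ)) ^ 2))
    (v : ι → ℤ × ℤ) (P R : EuclideanSpace ℝ (Fin 2) × EuclideanSpace ℝ (Fin 2))
    (hP : ∀ B', Q P v ≤ Q B' v) (hR : ∀ B', Q R v ≤ Q B' v) : P = R := by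
  have hPR : Q P v = Q R v := le_antisymm (hP R) (hR P)
  have key : Q ((2:ℝ)⁻¹ • (P.1 + R.1), (2:ℝ)⁻¹ • (P.2 + R.2)) v ≤ (Q P v + Q R v)/2
      - δB * (‖P.1 - R.1‖^2 + ‖P.2 - R.2‖^2)/4 := by
    rw [hQ, hQ, hQ]
    dsimp only
    have hsum : ∀ i ∈ Finset.univ (α := ι),
        ‖((v i).1 : ℝ) • ((2:ℝ)⁻¹ • (P.1 + R.1)) + ((v i).2 : ℝ) • ((2:ℝ)⁻¹ • (P.2 + R.2)) - e i‖ ^ 2 ≤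
        ‖((v i).1 : ℝ) • P.1 + ((v i).2 : ℝ) • P.2 - e i‖ ^ 2 / 2
          + ‖((v i).1 : ℝ) • R.1 + ((v i).2 : ℝ) • R.2 - e i‖ ^ 2 / 2 := by
      intro i _
      have heq : ((v i).1 : ℝ) • ((2:ℝ)⁻¹ • (P.1 + R.1)) + ((v i).2 : ℝ) • ((2:ℝ)⁻¹ • (P.2 + R.2)) - e i =
          (2:ℝ)⁻¹ • ((((v i).1 : ℝ) • P.1 + ((v i).2 : ℝ) • P.2 - e i)
            + (((v i).1 : ℝ) • R.1 + ((v i).2 : ℝ) • R.2 - e i)) := by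
        module
      rw [heq, mid_sq]
      have := sq_nonneg ‖(((v i).1 : ℝ) • P.1 + ((v i).2 : ℝ) • P.2 - e i)
            - (((v i).1 : ℝ) • R.1 + ((v i).2 : ℝ) • R.2 - e i)‖
      linarith
    have hs := Finset.sum_le_sum hsum
    rw [Finset.sum_add_distrib, ← Finset.sum_div, ← Finset.sum_div] at hs
    have h1 := mid_sq P.1 R.1
    have h2 := mid_sq P.2 R.2
    nlinarith [hs, h1, h2]
  have hle := hP ((2:ℝ)⁻¹ • (P.1 + R.1), (2:ℝ)⁻¹ • (P.2 + R.2))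
  have hzero : ‖P.1 - R.1‖^2 + ‖P.2 - R.2‖^2 ≤ 0 := by
    nlinarith [key, hle, hPR, hδB]
  have e1 : P.1 = R.1 := by
    have h1 := sq_nonneg ‖P.1 - R.1‖
    have h2 := sq_nonneg ‖P.2 - R.2‖
    have h3 : ‖P.1 - R.1‖^2 = 0 := by linarith
    have h4 : ‖P.1 - R.1‖ = 0 := by nlinarith [norm_nonneg (P.1 - R.1)]
    exact sub_eq_zero.mp (norm_eq_zero.mp h4)
  have e2 : P.2 = R.2 := by
    have h1 := sq_nonneg ‖P.1 - R.1‖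
    have h2 := sq_nonneg ‖P.2 - R.2‖
    have h3 : ‖P.2 - R.2‖^2 = 0 := by linarith
    have h4 : ‖P.2 - R.2‖ = 0 := by nlinarith [norm_nonneg (P.2 - R.2)]
    exact sub_eq_zero.mp (norm_eq_zero.mp h4)
  exact Prod.ext e1 e2

/-- Theorem 5.3 (finite-time convergence of the alternate minimization): the
objective sequence is non-increasing, the iterates are bounded, and both the
integer coefficients and the basis iterates are eventually constant. -/
theorem stmt_17 {ι : Type*} [Fintype ι]
    (e : ι → EuclideanSpace ℝ (Fin 2)) (δB δM : ℝ) (hδB : 0 < δB) (hδM : 0 < δM)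
    (Q : (EuclideanSpace ℝ (Fin 2) × EuclideanSpace ℝ (Fin 2)) → (ι → ℤ × ℤ) → ℝ)
    (hQ : ∀ B M, Q B M =
      (∑ i, ‖((M i).1 : ℝ) • B.1 + ((M i).2 : ℝ) • B.2 - e i‖ ^ 2)
        + δB * (‖B.1‖ ^ 2 + ‖B.2‖ ^ 2)
        + δM * ∑ i, (((M i).1 : ℝ) ^ 2 + ((M i).2 : ℝ) ^ 2))
    (B : ℕ → EuclideanSpace ℝ (Fin 2) × EuclideanSpace ℝ (Fin 2))
    (M : ℕ → ι → ℤ × ℤ)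
    (hM : ∀ n, Q (B n) (M (n + 1)) < Q (B n) (M n) ∨ M (n + 1) = M n)
    (hB : ∀ n B', Q (B (n + 1)) (M (n + 1)) ≤ Q B' (M (n + 1))) :
    (∀ n, Q (B (n + 1)) (M (n + 1)) ≤ Q (B n) (M n)) ∧
    (∃ C : ℝ, ∀ n, ‖(B n).1‖ ≤ C ∧ ‖(B n).2‖ ≤ C ∧
        ∀ i, |(((M n i).1 : ℝ))| ≤ C ∧ |(((M n i).2 : ℝ))| ≤ C) ∧
    (∃ N, ∀ n, N ≤ n → M n = M N ∧ B n = B N) := by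
  classical
  set q : ℕ → ℝ := fun n => Q (B n) (M n) with hq
  -- monotonicity
  have hmono : ∀ n, q (n+1) ≤ q n := by
    intro n
    have h1 : q (n+1) ≤ Q (B n) (M (n+1)) := hB n (B n)
    rcases hM n with h | h
    · exact h1.trans h.le
    · rw [h] at h1; exact h1
  have hanti : Antitone q := antitone_nat_of_succ_le hmono
  -- nonnegativity of helper pieces
  have hsum_nonneg : ∀ (P : EuclideanSpace ℝ (Fin 2) × EuclideanSpace ℝ (Fin 2)) (v : ι → ℤ × ℤ),
      (0:ℝ) ≤ ∑ i, ‖((v i).1 : ℝ) • P.1 + ((v i).2 : ℝ) • P.2 - e i‖ ^ 2 :=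
    fun P v => Finset.sum_nonneg fun i _ => sq_nonneg _
  have hsq_nonneg : ∀ (v : ι → ℤ × ℤ),
      (0:ℝ) ≤ ∑ i, (((v i).1 : ℝ) ^ 2 + (((v i).2 : ℝ)) ^ 2) :=
    fun v => Finset.sum_nonneg fun i _ => by positivity
  -- bound along the sequence
  have hq0 : ∀ n, q n ≤ q 0 := fun n => hanti (Nat.zero_le n)
  have hq0nn : (0:ℝ) ≤ q 0 := by
    have hexp := hQ (B 0) (M 0)
    have := hsum_nonneg (B 0) (M 0)
    have := hsq_nonneg (M 0)
    have := mul_nonneg hδM.le (hsq_nonneg (M 0))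
    have : (0:ℝ) ≤ δB * (‖(B 0).1‖^2 + ‖(B 0).2‖^2) :=
      mul_nonneg hδB.le (add_nonneg (sq_nonneg _) (sq_nonneg _))
    simp only [hq]
    rw [hexp]
    positivity
  obtain ⟨C, hC⟩ : ∃ C : ℝ, C = Real.sqrt (q 0 / δB) + Real.sqrt (q 0 / δM) := ⟨_, rfl⟩
  have hbound : ∀ n, ‖(B n).1‖ ≤ C ∧ ‖(B n).2‖ ≤ C ∧
      ∀ i, |(((M n i).1 : ℝ))| ≤ C ∧ |(((M n i).2 : ℝ))| ≤ C := by
    intro n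
    have hqn := hq0 n
    have hexp := hQ (B n) (M n)
    have hB1 : δB * ‖(B n).1‖^2 ≤ q 0 := by
      nlinarith [hsum_nonneg (B n) (M n), hsq_nonneg (M n), sq_nonneg ‖(B n).2‖,
        mul_nonneg hδM.le (hsq_nonneg (M n)), mul_nonneg hδB.le (sq_nonneg ‖(B n).2‖)]
    have hB2 : δB * ‖(B n).2‖^2 ≤ q 0 := by
      nlinarith [hsum_nonneg (B n) (M n), hsq_nonneg (M n), sq_nonneg ‖(B n).1‖,
        mul_nonneg hδM.le (hsq_nonneg (M n)), mul_nonneg hδB.le (sq_nonneg ‖(B n).1‖)]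
    have sqrts : (0:ℝ) ≤ Real.sqrt (q 0 / δB) := Real.sqrt_nonneg _
    have sqrts2 : (0:ℝ) ≤ Real.sqrt (q 0 / δM) := Real.sqrt_nonneg _
    have key1 : ‖(B n).1‖ ≤ Real.sqrt (q 0 / δB) :=
      Real.le_sqrt_of_sq_le ((le_div_iff₀ hδB).mpr (by linarith))
    have key2 : ‖(B n).2‖ ≤ Real.sqrt (q 0 / δB) :=
      Real.le_sqrt_of_sq_le ((le_div_iff₀ hδB).mpr (by linarith))
    refine ⟨by rw [hC]; linarith, by rw [hC]; linarith, fun i => ?_⟩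
    have hterm : (((M n i).1 : ℝ) ^ 2 + (((M n i).2 : ℝ)) ^ 2) ≤
        ∑ j, (((M n j).1 : ℝ) ^ 2 + (((M n j).2 : ℝ)) ^ 2) :=
      Finset.single_le_sum (f := fun j => (((M n j).1 : ℝ) ^ 2 + (((M n j).2 : ℝ)) ^ 2))
        (fun j _ => by positivity) (Finset.mem_univ i)
    have hM1 : δM * (((M n i).1 : ℝ) ^ 2 + (((M n i).2 : ℝ)) ^ 2) ≤ q 0 := by
      nlinarith [hsum_nonneg (B n) (M n), sq_nonneg ‖(B n).1‖, sq_nonneg ‖(B n).2‖,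
        mul_nonneg hδB.le (add_nonneg (sq_nonneg ‖(B n).1‖) (sq_nonneg ‖(B n).2‖)),
        mul_le_mul_of_nonneg_left hterm hδM.le]
    constructor
    · have h5 : |(((M n i).1 : ℝ))| ≤ Real.sqrt (q 0 / δM) := by
        apply Real.le_sqrt_of_sq_le
        rw [sq_abs, le_div_iff₀ hδM]
        nlinarith [sq_nonneg (((M n i).2 : ℝ))]
      rw [hC]; linarith
    · have h5 : |(((M n i).2 : ℝ))| ≤ Real.sqrt (q 0 / δM) := by
        apply Real.le_sqrt_of_sq_le
        rw [sq_abs, le_div_iff₀ hδM]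
        nlinarith [sq_nonneg (((M n i).1 : ℝ))]
      rw [hC]; linarith
  refine ⟨hmono, ⟨C, hbound⟩, ?_⟩
  -- finiteness of the M values
  set k : ℤ := ⌈C⌉ with hk
  have hMmem : ∀ n, M n ∈ Fintype.piFinset
      (fun _ : ι => Finset.Icc (-k) k ×ˢ Finset.Icc (-k) k) := by
    intro n
    rw [Fintype.mem_piFinset]
    intro i
    obtain ⟨-, -, hi⟩ := hbound n
    obtain ⟨h1, h2⟩ := hi i
    have c1 : (|(M n i).1| : ℝ) ≤ (k : ℝ) := by
      push_cast
      exact h1.trans (Int.le_ceil C)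
    have c2 : (|(M n i).2| : ℝ) ≤ (k : ℝ) := by
      push_cast
      exact h2.trans (Int.le_ceil C)
    have c1' : |(M n i).1| ≤ k := by exact_mod_cast c1
    have c2' : |(M n i).2| ≤ k := by exact_mod_cast c2
    rw [Finset.mem_product, Finset.mem_Icc, Finset.mem_Icc]
    exact ⟨abs_le.mp c1', abs_le.mp c2'⟩
  have hrangeM : (Set.range M).Finite :=
    Set.Finite.subset (Finset.finite_toSet _) (fun v ⟨n, hn⟩ => by
      simp only [Finset.coe_sort_coe, Finset.mem_coe]; rw [← hn]; exact hMmem n)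
  -- q n is the min value for M n when n ≥ 1
  set φ : (ι → ℤ × ℤ) → ℝ := fun v => sInf (Set.range fun B' => Q B' v) with hφ
  have hqφ : ∀ n, 1 ≤ n → q n = φ (M n) := by
    intro n hn
    obtain ⟨m, rfl⟩ := Nat.exists_eq_add_of_le hn
    symm
    apply IsLeast.csInf_eq
    constructor
    · exact ⟨B (1 + m), rfl⟩
    · rintro r ⟨B', rfl⟩
      have := hB m B'
      simpa [Nat.add_comm 1 m] using this
  set T : Set ℝ := q '' {n | 1 ≤ n} with hT
  have hTfin : T.Finite := by
    apply Set.Finite.subset (hrangeM.image φ)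
    rintro t ⟨n, hn, rfl⟩
    exact ⟨M n, ⟨n, rfl⟩, (hqφ n (Set.mem_setOf.mp hn)).symm⟩
  have hTne : T.Nonempty := ⟨q 1, 1, Set.mem_setOf.mpr le_rfl, rfl⟩
  obtain ⟨a, ⟨N, hN1, rfl⟩, hmin⟩ := Set.exists_min_image T id hTfin hTne
  -- q is constant from N on
  have hqconst : ∀ n, N ≤ n → q n = q N := by
    intro n hn
    exact le_antisymm (hanti hn) (hmin (q n) ⟨n, Set.mem_setOf.mpr (hN1.trans hn), rfl⟩)
  -- M is constant from N on
  have hMstep : ∀ n, N ≤ n → M (n+1) = M n := by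
    intro n hn
    rcases hM n with h | h
    · exfalso
      have h1 : q (n+1) ≤ Q (B n) (M (n+1)) := hB n (B n)
      have h2 : q (n+1) < q n := lt_of_le_of_lt h1 h
      rw [hqconst n hn, hqconst (n+1) (hn.trans (Nat.le_succ n))] at h2
      exact lt_irrefl _ h2
    · exact h
  have hMconst : ∀ n, N ≤ n → M n = M N := by
    intro n hn
    induction n, hn using Nat.le_induction with
    | base => rfl
    | succ m hm ih => rw [hMstep m hm, ih]
  -- B is constant from N on (uniqueness of the minimizer)
  have hBmin : ∀ n, N ≤ n → ∀ B', Q (B n) (M N) ≤ Q B' (M N) := by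
    intro n hn B'
    obtain ⟨m, rfl⟩ := Nat.exists_eq_add_of_le (hN1.trans hn)
    have h := hB m B'
    have hMe : M (1 + m) = M N := hMconst (1+m) hn
    rw [Nat.add_comm 1 m] at hMe ⊢
    rw [hMe] at h
    exact h
  have hBconst : ∀ n, N ≤ n → B n = B N := by
    intro n hn
    exact uniq_min e δB δM hδB Q hQ (M N) (B n) (B N) (hBmin n hn) (hBmin N le_rfl)
  exact ⟨N, fun n hn => ⟨hMconst n hn, hBconst n hn⟩⟩
end
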